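/- Let ψ : [-1,1] → ℝ be ψ(t) = (1-t²) (the 1D bubble function, normalized to max value 1 at 0 with factor adjustment: take ψ(t) = 1 - t²). Then for every polynomial v of degree at most p on [-1,1]: (i) ∫_{-1}^1 (ψ v)² ≤ ∫_{-1}^1 v², and (ii) there is a constant c(p) > 0 with c(p) ∫_{-1}^1 v² ≤ ∫_{-1}^1 ψ v². -/

import Mathlib

open MeasureTheory Set Polynomial

/-- Quadratic form `a ↦ ∫ w(t) (∑ aᵢ tⁱ)²`. -/
noncomputable def bubQ (w : ℝ → ℝ) (n : ℕ) (a : Fin n → ℝ) : ℝ :=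
  ∫ t in (-1:ℝ)..1, w t * (∑ i, a i * t ^ (i : ℕ)) ^ 2

lemma bubQ_eq (w : ℝ → ℝ) (hw : Continuous w) (n : ℕ) (a : Fin n → ℝ) :
    bubQ w n a = ∑ i : Fin n, ∑ j : Fin n,
      a i * a j * ∫ t in (-1:ℝ)..1, w t * t ^ ((i:ℕ) + (j:ℕ)) := by
  unfold bubQ
  have h : ∀ t : ℝ, w t * (∑ i, a i * t ^ (i:ℕ)) ^ 2
      = ∑ i : Fin n, ∑ j : Fin n, a i * a j * (w t * t ^ ((i:ℕ)+(j:ℕ))) := by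
    intro t
    rw [sq, Finset.sum_mul_sum, Finset.mul_sum]
    refine Finset.sum_congr rfl fun i _ => ?_
    rw [Finset.mul_sum]
    refine Finset.sum_congr rfl fun j _ => ?_
    rw [pow_add]; ring
  simp_rw [h]
  rw [intervalIntegral.integral_finset_sum]
  · refine Finset.sum_congr rfl fun i _ => ?_
    rw [intervalIntegral.integral_finset_sum]
    · exact Finset.sum_congr rfl fun j _ => intervalIntegral.integral_const_mul _ _
    · intro j _
      exact Continuous.intervalIntegrable (by continuity) _ _
  · intro i _
    exact Continuous.intervalIntegrable (by continuity) _ _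

lemma bubQ_continuous (w : ℝ → ℝ) (hw : Continuous w) (n : ℕ) :
    Continuous (bubQ w n) := by
  have h : bubQ w n = fun a => ∑ i : Fin n, ∑ j : Fin n,
      a i * a j * ∫ t in (-1:ℝ)..1, w t * t ^ ((i:ℕ) + (j:ℕ)) :=
    funext (bubQ_eq w hw n)
  rw [h]
  exact continuous_finset_sum _ fun i _ => continuous_finset_sum _ fun j _ =>
    (((continuous_apply i).mul (continuous_apply j)).mul continuous_const)

lemma bubQ_smul (w : ℝ → ℝ) (n : ℕ) (r : ℝ) (a : Fin n → ℝ) :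
    bubQ w n (r • a) = r ^ 2 * bubQ w n a := by
  unfold bubQ
  have h : ∀ t : ℝ, w t * (∑ i, (r • a) i * t ^ (i:ℕ)) ^ 2
      = r ^ 2 * (w t * (∑ i, a i * t ^ (i:ℕ)) ^ 2) := by
    intro t
    have hs : ∑ i, (r • a) i * t ^ (i:ℕ) = r * ∑ i, a i * t ^ (i:ℕ) := by
      rw [Finset.mul_sum]
      exact Finset.sum_congr rfl fun i _ => by simp [mul_assoc]
    rw [hs]; ring
  simp_rw [h]
  exact intervalIntegral.integral_const_mul _ _

lemma bubQ_pos (n : ℕ) {a : Fin n → ℝ} (ha : a ≠ 0) :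
    0 < bubQ (fun t => 1 - t ^ 2) n a := by
  set q : Polynomial ℝ := ∑ i : Fin n, Polynomial.C (a i) * Polynomial.X ^ (i:ℕ) with hq
  have hqe : ∀ t : ℝ, q.eval t = ∑ i, a i * t ^ (i:ℕ) := by
    intro t; simp [hq, Polynomial.eval_finset_sum]
  have hcoeff : ∀ i : Fin n, q.coeff (i:ℕ) = a i := by
    intro i
    rw [hq, Polynomial.finset_sum_coeff]
    rw [Finset.sum_eq_single i]
    · simp
    · intro j _ hji
      simp only [Polynomial.coeff_C_mul, Polynomial.coeff_X_pow]
      rw [if_neg (by simpa [Fin.val_eq_val] using (Ne.symm hji))]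
      ring
    · simp
  have hq0 : q ≠ 0 := by
    intro h
    apply ha
    funext i
    have := hcoeff i
    rw [h] at this
    simpa using this.symm
  have hroots : {x : ℝ | q.IsRoot x}.Finite := Polynomial.finite_setOf_isRoot hq0
  have hIoo : (Ioo (-1:ℝ) 1).Infinite := Set.Ioo_infinite (by norm_num : (-1:ℝ) < 1)
  obtain ⟨t₀, ht₀⟩ := (hIoo.diff hroots).nonempty
  have ht₀mem : t₀ ∈ Ioo (-1:ℝ) 1 := ht₀.1
  have ht₀ne : q.eval t₀ ≠ 0 := ht₀.2
  unfold bubQ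
  apply intervalIntegral.integral_pos (by norm_num)
  · exact (Continuous.continuousOn (by continuity))
  · intro x hx
    have h1 : 0 ≤ 1 - x ^ 2 := by nlinarith [hx.1, hx.2]
    positivity
  · refine ⟨t₀, ⟨le_of_lt ht₀mem.1, le_of_lt ht₀mem.2⟩, ?_⟩
    have h1 : 0 < 1 - t₀ ^ 2 := by nlinarith [ht₀mem.1, ht₀mem.2]
    have h2 : 0 < (∑ i, a i * t₀ ^ (i:ℕ)) ^ 2 := by
      rw [← hqe]
      positivity
    positivity

/-- Bubble-function estimates on the reference interval with `ψ(t) = 1 - t²`: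
for polynomials of degree at most `p`,
`∫ (ψ v)² ≤ ∫ v²` and `c(p) ∫ v² ≤ ∫ ψ v²`. -/
theorem stmt_16 (p : ℕ) :
    ∃ c : ℝ, 0 < c ∧ ∀ v : Polynomial ℝ, v.natDegree ≤ p →
      ((∫ t in (-1 : ℝ)..1, ((1 - t ^ 2) * v.eval t) ^ 2)
          ≤ ∫ t in (-1 : ℝ)..1, (v.eval t) ^ 2) ∧
      (c * ∫ t in (-1 : ℝ)..1, (v.eval t) ^ 2)
          ≤ ∫ t in (-1 : ℝ)..1, (1 - t ^ 2) * (v.eval t) ^ 2 := by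
  set n := p + 1 with hn
  set w : ℝ → ℝ := fun t => 1 - t ^ 2 with hw
  have hwc : Continuous w := by continuity
  have h1c : Continuous (fun _ : ℝ => (1:ℝ)) := continuous_const
  -- compactness on the sphere
  have hsph : (Metric.sphere (0 : Fin n → ℝ) 1).Nonempty :=
    NormedSpace.sphere_nonempty.mpr zero_le_one
  obtain ⟨a₀, ha₀, hmin⟩ := (isCompact_sphere (0 : Fin n → ℝ) 1).exists_isMinOn hsph
    (bubQ_continuous w hwc n).continuousOn
  obtain ⟨a₁, ha₁, hmax⟩ := (isCompact_sphere (0 : Fin n → ℝ) 1).exists_isMaxOn hsph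
    (bubQ_continuous (fun _ => 1) h1c n).continuousOn
  set c₀ := bubQ w n a₀ with hc₀def
  have ha₀ne : a₀ ≠ 0 := by
    intro h
    rw [mem_sphere_zero_iff_norm] at ha₀
    rw [h] at ha₀; simp at ha₀
  have hc₀ : 0 < c₀ := bubQ_pos n ha₀ne
  set C₁ := max (bubQ (fun _ => 1) n a₁) 1 with hC₁def
  have hC₁ : 0 < C₁ := lt_of_lt_of_le one_pos (le_max_right _ _)
  refine ⟨c₀ / C₁, div_pos hc₀ hC₁, fun v hv => ?_⟩
  have hvc : Continuous fun t : ℝ => v.eval t := v.continuous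
  constructor
  · -- part (i)
    apply intervalIntegral.integral_mono_on (by norm_num)
      (Continuous.intervalIntegrable (by continuity) _ _)
      (Continuous.intervalIntegrable (by continuity) _ _)
    intro t ht
    have h1 : 0 ≤ 1 - t ^ 2 := by nlinarith [ht.1, ht.2]
    have h2 : (1 - t ^ 2) ^ 2 ≤ 1 := by nlinarith [sq_nonneg t, sq_nonneg (t^2)]
    calc ((1 - t ^ 2) * v.eval t) ^ 2 = (1 - t ^ 2) ^ 2 * (v.eval t) ^ 2 := by ring
      _ ≤ 1 * (v.eval t) ^ 2 := mul_le_mul_of_nonneg_right h2 (sq_nonneg _)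
      _ = (v.eval t) ^ 2 := one_mul _
  · -- part (ii)
    rcases eq_or_ne v 0 with rfl | hv0
    · set_option maxRecDepth 4000 in
      simp only [Polynomial.eval_zero, ne_eq, OfNat.ofNat_ne_zero, not_false_eq_true,
        zero_pow, mul_zero, intervalIntegral.integral_zero, le_refl]
    set a : Fin n → ℝ := fun i => v.coeff i with hadef
    have hane : a ≠ 0 := by
      intro h
      apply Polynomial.leadingCoeff_ne_zero.mpr hv0
      have hlt : v.natDegree < n := lt_of_le_of_lt hv (Nat.lt_succ_self p)
      exact congrFun h ⟨v.natDegree, hlt⟩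
    have he : ∀ t : ℝ, v.eval t = ∑ i : Fin n, a i * t ^ (i:ℕ) := by
      intro t
      rw [Polynomial.eval_eq_sum_range' (lt_of_le_of_lt hv (Nat.lt_succ_self p))]
      exact (Fin.sum_univ_eq_sum_range (fun i => v.coeff i * t ^ i) n).symm
    have hGv : (∫ t in (-1:ℝ)..1, (v.eval t) ^ 2) = bubQ (fun _ => 1) n a := by
      unfold bubQ; simp_rw [one_mul, he]
    have hFv : (∫ t in (-1:ℝ)..1, (1 - t ^ 2) * (v.eval t) ^ 2) = bubQ w n a := by
      unfold bubQ; simp_rw [he]; rfl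
    rw [hGv, hFv]
    set r := ‖a‖ with hr
    have hrpos : 0 < r := norm_pos_iff.mpr hane
    set b : Fin n → ℝ := r⁻¹ • a with hbdef
    have hbs : b ∈ Metric.sphere (0 : Fin n → ℝ) 1 := by
      rw [mem_sphere_zero_iff_norm, hbdef, norm_smul, norm_inv, Real.norm_eq_abs,
        abs_of_pos hrpos]
      exact inv_mul_cancel₀ (ne_of_gt hrpos)
    have hab : a = r • b := by
      rw [hbdef, smul_smul, mul_inv_cancel₀ (ne_of_gt hrpos), one_smul]
    have hFa : bubQ w n a = r ^ 2 * bubQ w n b := by rw [hab, bubQ_smul]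
    have hGa : bubQ (fun _ => 1) n a = r ^ 2 * bubQ (fun _ => 1) n b := by
      rw [hab, bubQ_smul]
    have hF : c₀ ≤ bubQ w n b := isMinOn_iff.mp hmin b hbs
    have hG : bubQ (fun _ => 1) n b ≤ C₁ := le_trans (isMaxOn_iff.mp hmax b hbs) (le_max_left _ _)
    rw [hFa, hGa, div_mul_eq_mul_div, div_le_iff₀ hC₁]
    have hr2 : 0 ≤ r ^ 2 := sq_nonneg r
    nlinarith [mul_le_mul_of_nonneg_left hG (mul_nonneg hc₀.le hr2),
      mul_le_mul_of_nonneg_left hF (mul_nonneg hC₁.le hr2)]
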